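/- arXiv:0911.4900 — 3 statements merged into one kernel-verified Lean document; each statement's English description precedes it below -/
import Mathlib

section
/- Let η be a positive nondecreasing sequence with sup_k η(k)/η(κk) < 1 for some integer κ > 1, and let 0 < r < ∞. Then there exist constants c, C > 0 such that for every finite Γ ⊂ ℕ, c·η(|Γ|) ≤ (∑_{k=1}^{|Γ|} η(k)^r / k)^{1/r} ≤ C·η(|Γ|). -/
set_option maxHeartbeats 1000000 in
/-- Lemma 2.4(b): if `η` is positive, nondecreasing, doubling and satisfies
`sup_k η(k)/η(κk) < 1` for some integer `κ > 1`, and `0 < r < ∞`, then the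
`ℓ^r_η` quasi-norm of the indicator of any finite nonempty set `Γ`, namely
`(∑_{k=1}^{|Γ|} η(k)^r/k)^{1/r}`, is comparable to `η(|Γ|)`. -/
theorem lr_norm_indicator (η : ℕ → ℝ) (D : ℝ)
    (hpos : ∀ k, 1 ≤ k → 0 < η k)
    (hmono : ∀ k, 1 ≤ k → η k ≤ η (k + 1))
    (hdoub : ∀ k, 1 ≤ k → η (2 * k) ≤ D * η k)
    (κ : ℕ) (hκ : 1 < κ) (δ : ℝ) (hδ : δ < 1)
    (hsup : ∀ k, 1 ≤ k → η k / η (κ * k) ≤ δ)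
    (r : ℝ) (hr : 0 < r) :
    ∃ c > 0, ∃ C > 0, ∀ Γ : Finset ℕ, Γ.Nonempty →
      c * η Γ.card ≤ (∑ k ∈ Finset.Icc 1 Γ.card, η k ^ r / (k : ℝ)) ^ (1 / r) ∧
      (∑ k ∈ Finset.Icc 1 Γ.card, η k ^ r / (k : ℝ)) ^ (1 / r) ≤ C * η Γ.card := by
  have hκ0 : (0:ℕ) < κ := by omega
  have hκR : (0:ℝ) < κ := by exact_mod_cast hκ0
  have hmono' : ∀ k n, 1 ≤ k → k ≤ n → η k ≤ η n := by
    intro k n hk hkn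
    induction n, hkn using Nat.le_induction with
    | base => exact le_rfl
    | succ n hn ih => exact ih.trans (hmono n (hk.trans hn))
  have hδ0 : 0 < δ := by
    have h := hsup 1 le_rfl
    rw [mul_one] at h
    exact lt_of_lt_of_le (div_pos (hpos 1 le_rfl) (hpos κ hκ0)) h
  have hD1 : 1 ≤ D := by
    have h2 := hdoub 1 le_rfl
    have h3 := hmono 1 le_rfl
    have h1 := hpos 1 le_rfl
    nlinarith
  have hD0 : 0 < D := lt_of_lt_of_le one_pos hD1
  have hterm : ∀ k : ℕ, 1 ≤ k → 0 ≤ η k ^ r / (k : ℝ) := fun k hk =>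
    div_nonneg (Real.rpow_nonneg (hpos k hk).le r) (Nat.cast_nonneg k)
  set S : ℕ → ℝ := fun N => ∑ k ∈ Finset.Icc 1 N, η k ^ r / (k : ℝ) with hSdef
  -- constants
  have hδr1 : δ ^ r < 1 := Real.rpow_lt_one hδ0.le hδ hr
  have hδr0 : 0 < δ ^ r := Real.rpow_pos_of_pos hδ0 r
  set B : ℝ := κ / (1 - δ ^ r) with hBdef
  have hB0 : 0 < B := div_pos hκR (by linarith)
  have hBκ : (κ : ℝ) ≤ B := by
    rw [hBdef, le_div_iff₀ (by linarith)]
    nlinarith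
  have hBrec : B * δ ^ r + κ = B := by
    have h : B * (1 - δ ^ r) = κ := by
      rw [hBdef, div_mul_cancel₀ _ (ne_of_gt (by linarith : (0:ℝ) < 1 - δ ^ r))]
    nlinarith
  -- ### upper bound : S N ≤ B * η N ^ r
  have hU : ∀ N, 1 ≤ N → S N ≤ B * η N ^ r := by
    intro N
    induction N using Nat.strong_induction_on with
    | _ N ih =>
      intro hN
      have hηN : 0 < η N := hpos N hN
      have hηNr : 0 < η N ^ r := Real.rpow_pos_of_pos hηN r
      by_cases hNκ : N < κ
      · -- small case
        have h1 : S N ≤ ∑ _k ∈ Finset.Icc 1 N, η N ^ r := by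
          apply Finset.sum_le_sum
          intro k hk
          rw [Finset.mem_Icc] at hk
          calc η k ^ r / k ≤ η k ^ r :=
                div_le_self (Real.rpow_nonneg (hpos k hk.1).le r) (by exact_mod_cast hk.1)
            _ ≤ η N ^ r := Real.rpow_le_rpow (hpos k hk.1).le (hmono' k N hk.1 hk.2) hr.le
        have h2 : ∑ _k ∈ Finset.Icc 1 N, η N ^ r = N * η N ^ r := by
          rw [Finset.sum_const, Nat.card_Icc, nsmul_eq_mul]
          norm_num
        have hNR : (N:ℝ) ≤ κ := by exact_mod_cast hNκ.le
        calc S N ≤ N * η N ^ r := by rw [← h2]; exact h1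
          _ ≤ κ * η N ^ r := by nlinarith
          _ ≤ B * η N ^ r := by nlinarith
      · push_neg at hNκ
        set m := N / κ with hmdef
        have hm1 : 1 ≤ m := (Nat.one_le_div_iff hκ0).2 hNκ
        have hmN : m < N := Nat.div_lt_self (by omega) hκ
        have hηm : 0 < η m := hpos m hm1
        have hsplit : S m + ∑ k ∈ Finset.Ioc m N, η k ^ r / k = S N := by
          rw [hSdef]
          simp only
          rw [show Finset.Icc 1 N = Finset.Ioc 0 N from by ext; simp; omega,
              show Finset.Icc 1 m = Finset.Ioc 0 m from by ext; simp; omega]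
          exact Finset.sum_Ioc_consecutive _ (Nat.zero_le m) hmN.le
        -- tail bound
        have hNlt : N < (m + 1) * κ :=
          (Nat.div_lt_iff_lt_mul hκ0).1 (Nat.lt_succ_self (N / κ))
        have hm0 : (0:ℝ) < (m:ℝ) + 1 := by positivity
        have htail : ∑ k ∈ Finset.Ioc m N, η k ^ r / k ≤ κ * η N ^ r := by
          have h1 : ∀ k ∈ Finset.Ioc m N, η k ^ r / k ≤ η N ^ r / ((m:ℝ) + 1) := by
            intro k hk
            rw [Finset.mem_Ioc] at hk
            have hk1 : 1 ≤ k := by omega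
            apply div_le_div₀ (Real.rpow_nonneg hηN.le r)
              (Real.rpow_le_rpow (hpos k hk1).le (hmono' k N hk1 hk.2) hr.le) hm0
            exact_mod_cast hk.1
          have h4 : ((N - m : ℕ):ℝ) / ((m:ℝ) + 1) ≤ κ := by
            rw [div_le_iff₀ hm0]
            have h2 : ((N - m : ℕ) : ℝ) ≤ N := by exact_mod_cast Nat.sub_le N m
            have h3 : (N : ℝ) < ((m:ℝ) + 1) * κ := by exact_mod_cast hNlt
            nlinarith
          calc ∑ k ∈ Finset.Ioc m N, η k ^ r / k
              ≤ ∑ _k ∈ Finset.Ioc m N, η N ^ r / ((m:ℝ) + 1) := Finset.sum_le_sum h1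
            _ = (N - m : ℕ) * (η N ^ r / ((m:ℝ) + 1)) := by
                rw [Finset.sum_const, Nat.card_Ioc, nsmul_eq_mul]
            _ = ((N - m : ℕ):ℝ) / ((m:ℝ) + 1) * η N ^ r := by ring
            _ ≤ κ * η N ^ r := mul_le_mul_of_nonneg_right h4 hηNr.le
        -- head bound
        have hκm : κ * m ≤ N := by
          rw [hmdef, mul_comm]
          exact Nat.div_mul_le_self N κ
        have hηκm : 0 < η (κ * m) := hpos (κ * m) (Nat.mul_pos hκ0 hm1)
        have hmδ : η m ≤ δ * η (κ * m) := by
          have := hsup m hm1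
          rw [div_le_iff₀ hηκm] at this
          linarith
        have hmr : η m ^ r ≤ δ ^ r * η N ^ r := by
          calc η m ^ r ≤ (δ * η (κ * m)) ^ r :=
                Real.rpow_le_rpow hηm.le hmδ hr.le
            _ = δ ^ r * η (κ * m) ^ r := Real.mul_rpow hδ0.le hηκm.le
            _ ≤ δ ^ r * η N ^ r := by
                have := Real.rpow_le_rpow hηκm.le
                  (hmono' (κ * m) N (Nat.mul_pos hκ0 hm1) hκm) hr.le
                nlinarith
        have hhead : S m ≤ B * (δ ^ r * η N ^ r) := by
          calc S m ≤ B * η m ^ r := ih m hmN hm1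
            _ ≤ B * (δ ^ r * η N ^ r) := by nlinarith
        calc S N = S m + ∑ k ∈ Finset.Ioc m N, η k ^ r / k := hsplit.symm
          _ ≤ B * (δ ^ r * η N ^ r) + κ * η N ^ r := add_le_add hhead htail
          _ = (B * δ ^ r + κ) * η N ^ r := by ring
          _ = B * η N ^ r := by rw [hBrec]
  -- ### iterated doubling
  have hpow : ∀ j mm : ℕ, 1 ≤ mm → η (2 ^ j * mm) ≤ D ^ j * η mm := by
    intro j
    induction j with
    | zero => intro mm _; simp
    | succ j ih =>
      intro mm hmm
      have h1 : 1 ≤ 2 ^ j * mm := Nat.mul_pos (Nat.pow_pos (n := j) (by norm_num)) hmm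
      calc η (2 ^ (j+1) * mm) = η (2 * (2 ^ j * mm)) := by ring_nf
        _ ≤ D * η (2 ^ j * mm) := hdoub _ h1
        _ ≤ D * (D ^ j * η mm) := by nlinarith [ih mm hmm]
        _ = D ^ (j+1) * η mm := by ring
  have hκ2 : 2 * κ ≤ 2 ^ κ := by
    have h := Nat.lt_two_pow_self (n := κ - 1)
    have h2 : 2 ^ κ = 2 * 2 ^ (κ - 1) := by
      rw [← pow_succ']
      congr 1
      omega
    omega
  -- lower-bound constants
  set P : ℝ := D ^ κ with hPdef
  have hP0 : 0 < P := by positivity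
  set E : ℝ := P ^ r with hEdef
  have hE0 : 0 < E := Real.rpow_pos_of_pos hP0 r
  set cr : ℝ := min (1 / 2 * E⁻¹) (1 / κ) with hcrdef
  have hcr0 : 0 < cr := lt_min (by positivity) (by positivity)
  -- ### lower bound : cr * η N ^ r ≤ S N
  have hL : ∀ N, 1 ≤ N → cr * η N ^ r ≤ S N := by
    intro N hN
    have hηN : 0 < η N := hpos N hN
    have hηNr : 0 < η N ^ r := Real.rpow_pos_of_pos hηN r
    by_cases hNκ : N < κ
    · have h1 : η N ^ r / N ≤ S N := by
        apply Finset.single_le_sum (f := fun k => η k ^ r / (k:ℝ))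
        · intro k hk
          rw [Finset.mem_Icc] at hk
          exact hterm k hk.1
        · rw [Finset.mem_Icc]; omega
      have hNR0 : (0:ℝ) < N := by exact_mod_cast hN
      have h2 : cr * η N ^ r ≤ η N ^ r / N := by
        have h3 : cr ≤ 1 / (N:ℝ) := by
          calc cr ≤ 1 / κ := min_le_right _ _
            _ ≤ 1 / (N:ℝ) := by
              apply one_div_le_one_div_of_le hNR0
              exact_mod_cast hNκ.le
        calc cr * η N ^ r ≤ 1 / (N:ℝ) * η N ^ r :=
              mul_le_mul_of_nonneg_right h3 hηNr.le
          _ = η N ^ r / N := by ring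
      linarith
    · push_neg at hNκ
      set m := N / κ with hmdef
      have hm1 : 1 ≤ m := (Nat.one_le_div_iff hκ0).2 hNκ
      have hmN : m < N := Nat.div_lt_self (by omega) hκ
      have hηm : 0 < η m := hpos m hm1
      -- 2*m ≤ N
      have hm2 : 2 * m ≤ N := by
        have h1 : N / κ ≤ N / 2 := Nat.div_le_div_left hκ (by norm_num)
        have h2 : 2 * (N / 2) ≤ N := Nat.mul_div_le N 2
        omega
      -- N ≤ 2^κ * m
      have hNle : N ≤ 2 ^ κ * m := by
        have hNlt : N < (m + 1) * κ :=
          (Nat.div_lt_iff_lt_mul hκ0).1 (Nat.lt_succ_self (N / κ))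
        have : (m + 1) * κ ≤ 2 * m * κ := by nlinarith
        nlinarith
      have hηNP : η N ≤ P * η m := by
        calc η N ≤ η (2 ^ κ * m) := hmono' N _ hN hNle
          _ ≤ D ^ κ * η m := hpow κ m hm1
          _ = P * η m := by rw [hPdef]
      have hmrE : η N ^ r / E ≤ η m ^ r := by
        have h1 : η N / P ≤ η m := by
          rw [div_le_iff₀ hP0, mul_comm]; exact hηNP
        calc η N ^ r / E = (η N / P) ^ r := by
              rw [hEdef, ← Real.div_rpow hηN.le hP0.le]
          _ ≤ η m ^ r := Real.rpow_le_rpow (by positivity) h1 hr.le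
      -- block sum
      have hNR0 : (0:ℝ) < N := by exact_mod_cast hN
      have hblock : (1 / 2 : ℝ) * η m ^ r ≤ ∑ k ∈ Finset.Ioc m N, η k ^ r / k := by
        have h1 : ∀ k ∈ Finset.Ioc m N, η m ^ r / N ≤ η k ^ r / k := by
          intro k hk
          rw [Finset.mem_Ioc] at hk
          have hk1 : 1 ≤ k := by omega
          apply div_le_div₀ (Real.rpow_nonneg (hpos k hk1).le r)
            (Real.rpow_le_rpow hηm.le (hmono' m k hm1 hk.1.le) hr.le)
            (by exact_mod_cast hk1)
          exact_mod_cast hk.2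
        have h2 : ((N - m : ℕ):ℝ) * (η m ^ r / N) ≤ ∑ k ∈ Finset.Ioc m N, η k ^ r / k := by
          calc ((N - m : ℕ):ℝ) * (η m ^ r / N)
              = ∑ _k ∈ Finset.Ioc m N, η m ^ r / N := by
                rw [Finset.sum_const, Nat.card_Ioc, nsmul_eq_mul]
            _ ≤ ∑ k ∈ Finset.Ioc m N, η k ^ r / k := Finset.sum_le_sum h1
        have h3 : (1 / 2 : ℝ) * η m ^ r ≤ ((N - m : ℕ):ℝ) * (η m ^ r / N) := by
          have h4 : ((N - m : ℕ):ℝ) = (N:ℝ) - m := by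
            rw [Nat.cast_sub hmN.le]
          have h5 : (N:ℝ) ≤ 2 * ((N:ℝ) - m) := by
            have : (2 * m : ℕ) ≤ (N:ℕ) := hm2
            have h6 : 2 * (m:ℝ) ≤ N := by exact_mod_cast this
            linarith
          have hηmr : 0 < η m ^ r := Real.rpow_pos_of_pos hηm r
          rw [h4]
          rw [mul_div_assoc'] at *
          rw [le_div_iff₀ hNR0]
          nlinarith
        linarith
      have hsub : ∑ k ∈ Finset.Ioc m N, η k ^ r / k ≤ S N := by
        apply Finset.sum_le_sum_of_subset_of_nonneg
        · intro k hk
          rw [Finset.mem_Ioc] at hk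
          rw [Finset.mem_Icc]
          omega
        · intro k hk _
          rw [Finset.mem_Icc] at hk
          exact hterm k hk.1
      calc cr * η N ^ r ≤ 1 / 2 * E⁻¹ * η N ^ r :=
            mul_le_mul_of_nonneg_right (min_le_left _ _) hηNr.le
        _ = 1 / 2 * (η N ^ r / E) := by ring
        _ ≤ 1 / 2 * η m ^ r := by nlinarith
        _ ≤ ∑ k ∈ Finset.Ioc m N, η k ^ r / k := hblock
        _ ≤ S N := hsub
  -- ### conclusion
  refine ⟨cr ^ (1/r), Real.rpow_pos_of_pos hcr0 _, B ^ (1/r), Real.rpow_pos_of_pos hB0 _, ?_⟩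
  intro Γ hΓ
  set N := Γ.card with hNdef
  have hN : 1 ≤ N := hΓ.card_pos
  have hηN : 0 < η N := hpos N hN
  have hS0 : 0 ≤ S N := Finset.sum_nonneg fun k hk => hterm k (Finset.mem_Icc.1 hk).1
  have hr' : (0:ℝ) ≤ 1 / r := by positivity
  have key : ∀ x : ℝ, 0 ≤ x → (x * η N ^ r) ^ (1/r) = x ^ (1/r) * η N := by
    intro x hx
    rw [Real.mul_rpow hx (Real.rpow_nonneg hηN.le r), ← Real.rpow_mul hηN.le,
      mul_one_div_cancel hr.ne', Real.rpow_one]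
  constructor
  · have h1 := Real.rpow_le_rpow (by positivity) (hL N hN) hr'
    rw [key cr hcr0.le] at h1
    exact h1
  · have h1 := Real.rpow_le_rpow hS0 (hU N hN) hr'
    rw [key B hB0.le] at h1
    exact h1
end

section
/- Let {e_j} be a normalized unconditional basis in quasi-Banach 𝔹 and suppose that for some α > 0 there is C with sup_{N≥1} N^α γ_N(x) ≤ C ‖x‖_{ℓ^∞_{k^α η(k)}} for all x (the embedding into the greedy class 𝒢^α_∞), where γ_N is the greedy approximation error and {k^α η(k)} is nondecreasing and doubling. Then there is C' with ‖∑_{k∈Γ} e_k‖ ≤ C' η(N) for all Γ with |Γ| = N. -/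
/-- The indicator coefficient sequence of a finite set `Γ`. -/
noncomputable def indic (Γ : Finset ℕ) : ℕ → ℝ := fun k => if k ∈ Γ then 1 else 0

private theorem weight_mono' (η : ℕ → ℝ) (α : ℝ)
    (hωmono : ∀ k : ℕ, 1 ≤ k → (k : ℝ) ^ α * η k ≤ ((k : ℝ) + 1) ^ α * η (k + 1)) :
    ∀ b a : ℕ, 1 ≤ a → a ≤ b → (a : ℝ) ^ α * η a ≤ (b : ℝ) ^ α * η b := by
  intro b
  induction b with
  | zero => intro a ha hab; omega
  | succ n ih =>
    intro a ha hab
    rcases Nat.lt_or_ge a (n+1) with h | h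
    · have h1 : 1 ≤ n := by omega
      have key := hωmono n h1
      push_cast at key ⊢
      exact le_trans (ih a ha (by omega)) key
    · have : a = n + 1 := by omega
      rw [this]

/-- (3 ⇒ 1 of Theorem 3.1): if the greedy errors satisfy
`sup_N N^α γ_N(x) ≤ C ‖x‖_{ℓ^∞_{k^α η(k)}}` for all `x` (the embedding
`ℓ^∞_{k^α η(k)} ↪ 𝒢^α_∞`), with `k^α η(k)` nondecreasing and doubling, then
`‖∑_{k∈Γ} e_k‖ ≤ C' η(|Γ|)` for all finite `Γ`. -/
theorem greedy_embedding_implies_right_democracy (Nrm : (ℕ → ℝ) → ℝ)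
    (hnn : ∀ x, 0 ≤ Nrm x)
    (hone : ∀ j : ℕ, Nrm (indic {j}) = 1)
    (hlat : ∀ x y : ℕ → ℝ, (∀ k, |y k| ≤ |x k|) → Nrm y ≤ Nrm x)
    (η : ℕ → ℝ) (α C D : ℝ) (hα : 0 < α) (hC : 0 < C)
    (hηpos : ∀ k, 1 ≤ k → 0 < η k)
    (hωmono : ∀ k : ℕ, 1 ≤ k → (k : ℝ) ^ α * η k ≤ ((k : ℝ) + 1) ^ α * η (k + 1))
    (hωdoub : ∀ k, 1 ≤ k →
      ((2 * k : ℕ) : ℝ) ^ α * η (2 * k) ≤ D * ((k : ℝ) ^ α * η k))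
    (hemb : ∀ (c : ℕ → ℝ) (π : ℕ → ℕ), Function.Bijective π →
      (∀ k, |c (π (k + 1))| ≤ |c (π k)|) →
      ∀ M : ℝ, (∀ k : ℕ, ((k : ℝ) + 1) ^ α * η (k + 1) * |c (π k)| ≤ M) →
      ∀ N : ℕ, 1 ≤ N →
        (N : ℝ) ^ α *
          Nrm (fun i => if i ∈ (Finset.range N).image π then 0 else c i) ≤ C * M) :
    ∃ C' > 0, ∀ Γ : Finset ℕ, Γ.Nonempty → Nrm (indic Γ) ≤ C' * η Γ.card := by
  -- D is positive
  have hD : 0 < D := by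
    have h2 := hωdoub 1 le_rfl
    have hp2 : (0:ℝ) < ((2 * 1 : ℕ) : ℝ) ^ α * η (2 * 1) := by
      have : (0:ℝ) < ((2*1:ℕ):ℝ) ^ α := Real.rpow_pos_of_pos (by norm_num) α
      exact mul_pos this (hηpos 2 (by norm_num))
    have hp1 : (0:ℝ) < ((1:ℕ) : ℝ) ^ α * η 1 := by
      have : (0:ℝ) < ((1:ℕ):ℝ) ^ α := Real.rpow_pos_of_pos (by norm_num) α
      exact mul_pos this (hηpos 1 le_rfl)
    nlinarith
  refine ⟨2 * C * D, by positivity, ?_⟩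
  intro Γ hΓ
  set N := Γ.card with hN
  have hN1 : 1 ≤ N := Finset.card_pos.mpr hΓ
  set S : ℕ := Γ.sup id + 1 with hS
  have hSmem : ∀ i ∈ Γ, i < S := by
    intro i hi
    have := Finset.le_sup (f := id) hi
    simpa [hS] using Nat.lt_succ_of_le this
  set Γ' : Finset ℕ := (Finset.range N).image (fun i => S + i) with hΓ'
  have hΓ'mem : ∀ {i}, i ∈ Γ' ↔ ∃ k < N, S + k = i := by
    intro i; simp [hΓ']
  have hdisj : ∀ i ∈ Γ', i ∉ Γ := by
    intro i hi hiΓ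
    obtain ⟨k, hk, rfl⟩ := hΓ'mem.mp hi
    exact absurd (hSmem _ hiΓ) (by omega)
  -- the test vector
  set c : ℕ → ℝ := fun i => if i ∈ Γ then 1 else if i ∈ Γ' then 2 else 0 with hc
  -- complement predicate
  set p : ℕ → Prop := fun i => i ∉ Γ ∧ i ∉ Γ' with hp
  have hpdec : DecidablePred p := fun i => instDecidableAnd
  have hpinf : (setOf p).Infinite := by
    have : (setOf p) = (↑(Γ ∪ Γ') : Set ℕ)ᶜ := by
      ext i; simp [hp, not_or]; exact Iff.rfl
    rw [this]
    exact (Finset.finite_toSet _).infinite_compl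
  -- the ordering
  set eΓ := Γ.orderIsoOfFin (rfl : Γ.card = N) with heΓ
  set π : ℕ → ℕ := fun k =>
    if h : k < N then S + k
    else if h2 : k < 2 * N then (eΓ ⟨k - N, by omega⟩ : ℕ)
    else Nat.nth p (k - 2 * N) with hπ
  have hπ1 : ∀ k, k < N → π k = S + k := by
    intro k hk; simp [hπ, hk]
  have hπ2 : ∀ k (h : N ≤ k) (h2 : k < 2 * N), π k = (eΓ ⟨k - N, by omega⟩ : ℕ) := by
    intro k h h2; simp [hπ, Nat.not_lt.mpr h, h2]
  have hπ3 : ∀ k, 2 * N ≤ k → π k = Nat.nth p (k - 2 * N) := by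
    intro k hk
    have h1 : ¬ k < N := by omega
    have h2 : ¬ k < 2 * N := by omega
    simp [hπ, h1, h2]
  -- zone memberships
  have hz1 : ∀ k, k < N → π k ∈ Γ' ∧ π k ∉ Γ := by
    intro k hk
    rw [hπ1 k hk]
    have hmem : S + k ∈ Γ' := hΓ'mem.mpr ⟨k, hk, rfl⟩
    exact ⟨hmem, hdisj _ hmem⟩
  have hz2 : ∀ k, N ≤ k → k < 2 * N → π k ∈ Γ := by
    intro k h h2
    rw [hπ2 k h h2]
    exact (eΓ ⟨k - N, by omega⟩).2
  have hz3 : ∀ k, 2 * N ≤ k → p (π k) := by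
    intro k hk
    rw [hπ3 k hk]
    exact Nat.nth_mem_of_infinite hpinf _
  -- values of |c ∘ π|
  have hval : ∀ k, |c (π k)| = if k < N then 2 else if k < 2 * N then 1 else 0 := by
    intro k
    rcases Nat.lt_or_ge k N with h | h
    · obtain ⟨h1, h2⟩ := hz1 k h
      simp [hc, h, h1, h2]
    · rcases Nat.lt_or_ge k (2 * N) with h2 | h2
      · have := hz2 k h h2
        simp [hc, this, Nat.not_lt.mpr h, h2]
      · obtain ⟨h1, h3⟩ := hz3 k (by omega)
        simp [hc, h1, h3, Nat.not_lt.mpr h, Nat.not_lt.mpr h2]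
  -- bijectivity
  have hbij : Function.Bijective π := by
    constructor
    · intro k1 k2 he
      rcases Nat.lt_or_ge k1 N with h1 | h1 <;> rcases Nat.lt_or_ge k2 N with h2 | h2
      · rw [hπ1 k1 h1, hπ1 k2 h2] at he; omega
      · exfalso
        rcases Nat.lt_or_ge k2 (2 * N) with h3 | h3
        · exact (hz1 k1 h1).2 (he ▸ hz2 k2 h2 h3)
        · exact (hz3 k2 h3).2 (he ▸ (hz1 k1 h1).1)
      · exfalso
        rcases Nat.lt_or_ge k1 (2 * N) with h3 | h3
        · exact (hz1 k2 h2).2 (he ▸ hz2 k1 h1 h3)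
        · exact (hz3 k1 h3).2 (he ▸ (hz1 k2 h2).1)
      · rcases Nat.lt_or_ge k1 (2 * N) with h3 | h3 <;>
          rcases Nat.lt_or_ge k2 (2 * N) with h4 | h4
        · rw [hπ2 k1 h1 h3, hπ2 k2 h2 h4] at he
          have := eΓ.injective (Subtype.ext he)
          have := Fin.mk.injEq _ _ _ _ ▸ this
          omega
        · have h5 := hz2 k1 h1 h3
          rw [he] at h5
          exact absurd h5 (hz3 k2 h4).1
        · have h5 := hz2 k2 h2 h4
          rw [← he] at h5
          exact absurd h5 (hz3 k1 h3).1
        · rw [hπ3 k1 h3, hπ3 k2 h4] at he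
          have := Nat.nth_injective hpinf he
          omega
    · intro n
      by_cases hn : n ∈ Γ
      · obtain ⟨m, hm⟩ := eΓ.surjective ⟨n, hn⟩
        refine ⟨N + (m : ℕ), ?_⟩
        have hm2 : N + (m:ℕ) < 2 * N := by have := m.2; omega
        rw [hπ2 _ (by omega) hm2]
        have : (⟨N + (m:ℕ) - N, by omega⟩ : Fin N) = m := by
          apply Fin.ext; simp
        rw [this, hm]
      · by_cases hn' : n ∈ Γ'
        · obtain ⟨k, hk, rfl⟩ := hΓ'mem.mp hn'
          exact ⟨k, hπ1 k hk⟩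
        · have hpn : p n := ⟨hn, hn'⟩
          refine ⟨2 * N + Nat.count p n, ?_⟩
          rw [hπ3 _ (by omega)]
          simpa using Nat.nth_count (p := p) hpn
  -- monotonicity of |c ∘ π|
  have hmono : ∀ k, |c (π (k + 1))| ≤ |c (π k)| := by
    intro k
    rw [hval, hval]
    split_ifs <;> norm_num <;> omega
  -- the bound M
  set M : ℝ := 2 * (((2 * N : ℕ) : ℝ) ^ α * η (2 * N)) with hM
  have hw2N : (0:ℝ) < ((2 * N : ℕ) : ℝ) ^ α * η (2 * N) := by
    have : (0:ℝ) < ((2*N:ℕ):ℝ) ^ α :=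
      Real.rpow_pos_of_pos (by exact_mod_cast (by omega : 0 < 2 * N)) α
    exact mul_pos this (hηpos _ (by omega))
  have hMbd : ∀ k : ℕ, ((k : ℝ) + 1) ^ α * η (k + 1) * |c (π k)| ≤ M := by
    intro k
    rcases Nat.lt_or_ge k (2 * N) with h | h
    · have hwle : ((k : ℝ) + 1) ^ α * η (k + 1) ≤ ((2 * N : ℕ) : ℝ) ^ α * η (2 * N) := by
        have := weight_mono' η α hωmono (2 * N) (k + 1) (by omega) (by omega)
        push_cast at this ⊢
        exact this
      have hcle : |c (π k)| ≤ 2 := by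
        rw [hval]; split_ifs <;> norm_num
      have hwpos : (0:ℝ) ≤ ((k : ℝ) + 1) ^ α * η (k + 1) := by
        have h1 : (0:ℝ) < ((k:ℝ)+1) ^ α := Real.rpow_pos_of_pos (by positivity) α
        exact le_of_lt (mul_pos h1 (hηpos (k+1) (by omega)))
      calc ((k : ℝ) + 1) ^ α * η (k + 1) * |c (π k)|
          ≤ ((2 * N : ℕ) : ℝ) ^ α * η (2 * N) * 2 := by
            exact mul_le_mul hwle hcle (abs_nonneg _) (le_of_lt hw2N)
        _ = M := by rw [hM]; ring
    · have hkN : ¬ k < N := by omega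
      have : |c (π k)| = 0 := by rw [hval]; simp [Nat.not_lt.mpr h, hkN]
      rw [this, mul_zero, hM]
      positivity
  -- apply the embedding hypothesis
  have hkey := hemb c π hbij hmono M hMbd N hN1
  -- the remainder equals indic Γ
  have himg : (Finset.range N).image π = Γ' := by
    rw [hΓ']
    apply Finset.image_congr
    intro x hx
    exact hπ1 x (Finset.mem_range.mp hx)
  have hrem : (fun i => if i ∈ (Finset.range N).image π then 0 else c i) = indic Γ := by
    funext i
    rw [himg]
    by_cases hi : i ∈ Γ'
    · simp [hi, indic, hdisj i hi]
    · by_cases hiΓ : i ∈ Γ <;> simp [hi, hiΓ, hc, indic]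
  rw [hrem] at hkey
  -- conclude
  have hMle : M ≤ 2 * D * ((N : ℝ) ^ α * η N) := by
    have := hωdoub N hN1
    rw [hM]; nlinarith
  have hNα : (0:ℝ) < (N : ℝ) ^ α := Real.rpow_pos_of_pos (by exact_mod_cast Nat.pos_of_ne_zero (by omega)) α
  have : (N : ℝ) ^ α * Nrm (indic Γ) ≤ (N : ℝ) ^ α * (2 * C * D * η N) := by
    calc (N : ℝ) ^ α * Nrm (indic Γ) ≤ C * M := hkey
      _ ≤ C * (2 * D * ((N : ℝ) ^ α * η N)) := by
          exact mul_le_mul_of_nonneg_left hMle (le_of_lt hC)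
      _ = (N : ℝ) ^ α * (2 * C * D * η N) := by ring
  exact le_of_mul_le_mul_left this hNα
end

section
/- In the setting of Theorem 4.2: if the Bernstein inequality ‖x‖_{ℓ^q_{k^α η(k)}} ≤ C N^α ‖x‖_𝔹 holds for all x with at most N nonzero coefficients (all N ≥ 1), then ‖∑_{k∈Γ} e_k‖_𝔹 ≥ c·η(N) for all Γ with |Γ| = N, where c depends only on C, α, q and the doubling constant of η. -/
/-- (2 ⇒ 1 of Theorem 4.2): if the Bernstein inequality
`‖x‖_{ℓ^q_{k^α η(k)}} ≤ C N^α ‖x‖` holds for every `x` with at most `N` nonzero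
coefficients (the `ℓ^q` norm being computed from the decreasing rearrangement of
the coefficients), then `‖∑_{k∈Γ} e_k‖ ≥ c η(N)` for all `Γ` with `|Γ| = N`. -/
theorem bernstein_implies_left_democracy (Nrm : (ℕ → ℝ) → ℝ)
    (hnn : ∀ x, 0 ≤ Nrm x)
    (hone : ∀ j : ℕ, Nrm (indic {j}) = 1)
    (hlat : ∀ x y : ℕ → ℝ, (∀ k, |y k| ≤ |x k|) → Nrm y ≤ Nrm x)
    (η : ℕ → ℝ) (α q C D : ℝ) (hα : 0 < α) (hq : 0 < q) (hC : 0 < C)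
    (hηpos : ∀ k, 1 ≤ k → 0 < η k)
    (hmono : ∀ k, 1 ≤ k → η k ≤ η (k + 1))
    (hdoub : ∀ k, 1 ≤ k → η (2 * k) ≤ D * η k)
    (hbern : ∀ (c : ℕ → ℝ) (π : ℕ → ℕ), Function.Bijective π →
      (∀ k, |c (π (k + 1))| ≤ |c (π k)|) →
      ∀ N : ℕ, 1 ≤ N → (∃ Γ : Finset ℕ, Γ.card ≤ N ∧ ∀ i ∉ Γ, c i = 0) →
        (∑ k ∈ Finset.range N,
            (((k : ℝ) + 1) ^ α * η (k + 1) * |c (π k)|) ^ q / ((k : ℝ) + 1)) ^ (1 / q)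
          ≤ C * (N : ℝ) ^ α * Nrm c) :
    ∃ c' > 0, ∀ N : ℕ, 1 ≤ N → ∀ Γ : Finset ℕ, Γ.card = N →
      c' * η N ≤ Nrm (indic Γ) := by
  classical
  have hη1 := hηpos 1 le_rfl
  have hη2 := hηpos 2 (by norm_num)
  have hD : 0 < D := by
    have h := hdoub 1 le_rfl
    nlinarith
  have ηmono : ∀ a b : ℕ, 1 ≤ a → a ≤ b → η a ≤ η b := by
    intro a b ha hab
    induction b, hab using Nat.le_induction with
    | base => exact le_rfl
    | succ n hn ih => exact le_trans ih (hmono n (le_trans ha hn))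
  have hhalf : (0:ℝ) < (1/2 : ℝ) ^ (1/q) := Real.rpow_pos_of_pos (by norm_num) _
  have h2α : (0:ℝ) < (2:ℝ) ^ α := Real.rpow_pos_of_pos (by norm_num) _
  refine ⟨(1/2 : ℝ) ^ (1/q) / ((2:ℝ) ^ α * C * D), by positivity, ?_⟩
  intro N hN Γ hΓ
  have hN0 : (0:ℝ) < (N:ℝ) := by exact_mod_cast hN
  -- Construct the rearranging bijection π sending {0,…,N-1} onto Γ.
  have hcard : (Finset.range N).card = Γ.card := by simp [hΓ]
  haveI : Infinite ((↑(Finset.range N) : Set ℕ)ᶜ : Set ℕ) :=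
    ((Finset.range N).finite_toSet.infinite_compl).to_subtype
  haveI : Infinite ((↑Γ : Set ℕ)ᶜ : Set ℕ) :=
    (Γ.finite_toSet.infinite_compl).to_subtype
  obtain ⟨f⟩ : Nonempty ((((↑(Finset.range N) : Set ℕ)ᶜ : Set ℕ)) ≃ (((↑Γ : Set ℕ)ᶜ : Set ℕ))) :=
    nonempty_equiv_of_countable
  let e : ((↑(Finset.range N) : Set ℕ)) ≃ ((↑Γ : Set ℕ)) :=
    (Equiv.subtypeEquivRight (fun x => by simp)).trans
      ((Finset.equivOfCardEq hcard).trans (Equiv.subtypeEquivRight (fun x => by simp)))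
  let π : ℕ ≃ ℕ :=
    ((Equiv.Set.sumCompl (↑(Finset.range N) : Set ℕ)).symm.trans
      ((e.sumCongr f).trans (Equiv.Set.sumCompl (↑Γ : Set ℕ))))
  have hπin : ∀ k, k < N → π k ∈ Γ := by
    intro k hk
    have hk' : (k : ℕ) ∈ (↑(Finset.range N) : Set ℕ) := by simp [hk]
    show ((Equiv.Set.sumCompl (↑Γ : Set ℕ))
        ((e.sumCongr f) ((Equiv.Set.sumCompl (↑(Finset.range N) : Set ℕ)).symm k))) ∈ Γ
    have h1 : (Equiv.Set.sumCompl (↑(Finset.range N) : Set ℕ)).symm k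
        = Sum.inl (⟨k, hk'⟩ : ((↑(Finset.range N) : Set ℕ))) :=
      Equiv.Set.sumCompl_symm_apply (s := (↑(Finset.range N) : Set ℕ)) (x := ⟨k, hk'⟩)
    rw [h1]
    simp only [Equiv.sumCongr_apply, Sum.map_inl, Equiv.Set.sumCompl_apply_inl]
    exact (e ⟨k, hk'⟩).2
  have hπout : ∀ k, N ≤ k → π k ∉ Γ := by
    intro k hk
    have hk' : (k : ℕ) ∉ (↑(Finset.range N) : Set ℕ) := by simp; omega
    show ((Equiv.Set.sumCompl (↑Γ : Set ℕ))
        ((e.sumCongr f) ((Equiv.Set.sumCompl (↑(Finset.range N) : Set ℕ)).symm k))) ∉ Γ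
    rw [Equiv.Set.sumCompl_symm_apply_of_notMem hk']
    simp only [Equiv.sumCongr_apply, Sum.map_inr, Equiv.Set.sumCompl_apply_inr]
    exact (f ⟨k, hk'⟩).2
  have hval : ∀ k, indic Γ (π k) = if k < N then 1 else 0 := by
    intro k
    by_cases hk : k < N
    · simp [indic, hπin k hk, hk]
    · simp [indic, hπout k (le_of_not_gt hk), hk]
  have hdecr : ∀ k, |indic Γ (π (k+1))| ≤ |indic Γ (π k)| := by
    intro k
    rw [hval, hval]
    by_cases hk : k < N
    · by_cases hk1 : k + 1 < N <;> simp [hk, hk1]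
    · have h1 : ¬ (k + 1 < N) := by omega
      simp [hk, h1]
  have hsupp : ∃ Γ' : Finset ℕ, Γ'.card ≤ N ∧ ∀ i ∉ Γ', indic Γ i = 0 :=
    ⟨Γ, le_of_eq hΓ, fun i hi => by simp [indic, hi]⟩
  have H := hbern (indic Γ) π π.bijective hdecr N hN hsupp
  have hsum_eq : (∑ k ∈ Finset.range N,
        (((k : ℝ) + 1) ^ α * η (k + 1) * |indic Γ (π k)|) ^ q / ((k : ℝ) + 1))
      = ∑ k ∈ Finset.range N, (((k : ℝ) + 1) ^ α * η (k + 1)) ^ q / ((k : ℝ) + 1) := by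
    refine Finset.sum_congr rfl (fun k hk => ?_)
    rw [hval]
    simp [Finset.mem_range.mp hk]
  rw [hsum_eq] at H
  set m : ℕ := N / 2 + 1 with hm
  have hm1 : 1 ≤ m := by omega
  have hηm := hηpos m hm1
  have hηN := hηpos N hN
  have hm0 : (0:ℝ) < (m:ℝ) := by exact_mod_cast hm1
  -- lower bound each term of the upper half of the sum
  have hB : ∀ k ∈ Finset.Ico (N/2) N,
      ((m:ℝ) ^ α * η m) ^ q / (N:ℝ) ≤ (((k : ℝ) + 1) ^ α * η (k + 1)) ^ q / ((k : ℝ) + 1) := by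
    intro k hk
    obtain ⟨hk1, hk2⟩ := Finset.mem_Ico.mp hk
    have hmk : m ≤ k + 1 := by omega
    have hmkR : (m:ℝ) ≤ (k:ℝ) + 1 := by exact_mod_cast hmk
    have h1 : (m:ℝ) ^ α ≤ ((k:ℝ) + 1) ^ α :=
      Real.rpow_le_rpow hm0.le hmkR hα.le
    have h2 : η m ≤ η (k + 1) := ηmono m (k+1) hm1 hmk
    have h3 : (m:ℝ) ^ α * η m ≤ ((k:ℝ) + 1) ^ α * η (k + 1) :=
      mul_le_mul h1 h2 hηm.le (by positivity)
    have h4 : ((m:ℝ) ^ α * η m) ^ q ≤ (((k:ℝ) + 1) ^ α * η (k + 1)) ^ q :=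
      Real.rpow_le_rpow (by positivity) h3 hq.le
    have hkN : (k:ℝ) + 1 ≤ (N:ℝ) := by exact_mod_cast hk2
    have hηk := hηpos (k+1) (by omega)
    have hc0 : (0:ℝ) ≤ (((k:ℝ) + 1) ^ α * η (k + 1)) ^ q :=
      Real.rpow_nonneg (mul_nonneg (Real.rpow_nonneg (by positivity) _) hηk.le) _
    exact div_le_div₀ hc0 h4 (by positivity) hkN
  have hsub : Finset.Ico (N/2) N ⊆ Finset.range N := by
    intro x hx
    simp only [Finset.mem_Ico] at hx
    exact Finset.mem_range.mpr hx.2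
  have hS1 : ∑ k ∈ Finset.Ico (N/2) N, (((k : ℝ) + 1) ^ α * η (k + 1)) ^ q / ((k : ℝ) + 1)
      ≤ ∑ k ∈ Finset.range N, (((k : ℝ) + 1) ^ α * η (k + 1)) ^ q / ((k : ℝ) + 1) := by
    refine Finset.sum_le_sum_of_subset_of_nonneg hsub (fun i _ _ => ?_)
    have hη := hηpos (i+1) (by omega)
    positivity
  have hS2 : ((N - N/2 : ℕ) : ℝ) * (((m:ℝ) ^ α * η m) ^ q / (N:ℝ))
      ≤ ∑ k ∈ Finset.Ico (N/2) N, (((k : ℝ) + 1) ^ α * η (k + 1)) ^ q / ((k : ℝ) + 1) := by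
    have := Finset.card_nsmul_le_sum (Finset.Ico (N/2) N)
      (fun k => (((k : ℝ) + 1) ^ α * η (k + 1)) ^ q / ((k : ℝ) + 1))
      (((m:ℝ) ^ α * η m) ^ q / (N:ℝ)) hB
    rwa [Nat.card_Ico, nsmul_eq_mul] at this
  have hhalfN : (N:ℝ) / 2 ≤ ((N - N/2 : ℕ) : ℝ) := by
    have h : N ≤ 2 * (N - N/2) := by omega
    have h' : (N:ℝ) ≤ 2 * ((N - N/2 : ℕ) : ℝ) := by exact_mod_cast h
    linarith
  have hSsum : (1/2 : ℝ) * ((m:ℝ) ^ α * η m) ^ q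
      ≤ ∑ k ∈ Finset.range N, (((k : ℝ) + 1) ^ α * η (k + 1)) ^ q / ((k : ℝ) + 1) := by
    have hBpos : (0:ℝ) ≤ ((m:ℝ) ^ α * η m) ^ q / (N:ℝ) := by positivity
    have h1 : (N:ℝ)/2 * (((m:ℝ) ^ α * η m) ^ q / (N:ℝ))
        ≤ ((N - N/2 : ℕ) : ℝ) * (((m:ℝ) ^ α * η m) ^ q / (N:ℝ)) :=
      mul_le_mul_of_nonneg_right hhalfN hBpos
    have h2 : (N:ℝ)/2 * (((m:ℝ) ^ α * η m) ^ q / (N:ℝ))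
        = (1/2 : ℝ) * ((m:ℝ) ^ α * η m) ^ q := by
      field_simp
    linarith
  -- take rpow 1/q
  have h5 : ((1/2 : ℝ) * ((m:ℝ) ^ α * η m) ^ q) ^ (1/q)
      ≤ (∑ k ∈ Finset.range N, (((k : ℝ) + 1) ^ α * η (k + 1)) ^ q / ((k : ℝ) + 1)) ^ (1/q) :=
    Real.rpow_le_rpow (by positivity) hSsum (by positivity)
  have h6 : ((1/2 : ℝ) * ((m:ℝ) ^ α * η m) ^ q) ^ (1/q)
      = (1/2 : ℝ) ^ (1/q) * ((m:ℝ) ^ α * η m) := by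
    rw [Real.mul_rpow (by norm_num) (by positivity),
      ← Real.rpow_mul (by positivity : (0:ℝ) ≤ (m:ℝ) ^ α * η m) q (1/q),
      mul_one_div_cancel (ne_of_gt hq), Real.rpow_one]
  -- lower bound m^α and η m
  have hm2 : (N:ℝ) ≤ 2 * (m:ℝ) := by
    have h : N ≤ 2 * m := by omega
    exact_mod_cast h
  have h7 : (N:ℝ) ^ α / (2:ℝ) ^ α ≤ (m:ℝ) ^ α := by
    rw [← Real.div_rpow (by positivity) (by norm_num)]
    exact Real.rpow_le_rpow (by positivity) (by linarith) hα.le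
  have h8 : η N / D ≤ η m := by
    rw [div_le_iff₀ hD]
    have hd := hdoub m hm1
    have h9 : η N ≤ η (2*m) := ηmono N (2*m) hN (by omega)
    linarith
  have h10 : (1/2 : ℝ) ^ (1/q) * ((N:ℝ) ^ α / (2:ℝ) ^ α * (η N / D))
      ≤ (1/2 : ℝ) ^ (1/q) * ((m:ℝ) ^ α * η m) := by
    refine mul_le_mul_of_nonneg_left ?_ hhalf.le
    exact mul_le_mul h7 h8 (by positivity) (by positivity)
  have hfinal : (1/2 : ℝ) ^ (1/q) * ((N:ℝ) ^ α / (2:ℝ) ^ α * (η N / D))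
      ≤ C * (N:ℝ) ^ α * Nrm (indic Γ) := by
    calc (1/2 : ℝ) ^ (1/q) * ((N:ℝ) ^ α / (2:ℝ) ^ α * (η N / D))
        ≤ (1/2 : ℝ) ^ (1/q) * ((m:ℝ) ^ α * η m) := h10
      _ = ((1/2 : ℝ) * ((m:ℝ) ^ α * η m) ^ q) ^ (1/q) := h6.symm
      _ ≤ _ := le_trans h5 H
  -- conclude
  have hNα : (0:ℝ) < (N:ℝ) ^ α := Real.rpow_pos_of_pos hN0 _
  have key : (1/2 : ℝ) ^ (1/q) / ((2:ℝ) ^ α * C * D) * η N * (C * (N:ℝ) ^ α)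
      = (1/2 : ℝ) ^ (1/q) * ((N:ℝ) ^ α / (2:ℝ) ^ α * (η N / D)) := by
    field_simp
  have hmul : (1/2 : ℝ) ^ (1/q) / ((2:ℝ) ^ α * C * D) * η N * (C * (N:ℝ) ^ α)
      ≤ Nrm (indic Γ) * (C * (N:ℝ) ^ α) := by
    rw [key]
    calc (1/2 : ℝ) ^ (1/q) * ((N:ℝ) ^ α / (2:ℝ) ^ α * (η N / D))
        ≤ C * (N:ℝ) ^ α * Nrm (indic Γ) := hfinal
      _ = Nrm (indic Γ) * (C * (N:ℝ) ^ α) := by ring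
  exact le_of_mul_le_mul_right hmul (by positivity)
end
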